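/- For every graph G on vertex set [n], the permutation Π(G) is a Dumont derangement of the second kind on [2n]; that is, Π(G)(2i-1) > 2i-1 for i ∈ [n-1], Π(G)(2n-1) ≥ 2n-1, and Π(G)(2i) < 2i for all i ∈ [n]. -/

import Mathlib

/-- A graph on vertex set `[n]` (vertices `Fin n` in increasing order) is terrain-like
if it satisfies the X-property. -/
def TerrainLike {n : ℕ} (G : SimpleGraph (Fin n)) : Prop :=
  ∀ a b c d : Fin n, a < b → b < c → c < d → G.Adj a c → G.Adj b d → G.Adj a d

/-- The order `⪯` on pairs `(a,b)` with `a < b`: `{a,b} ⪯ {c,d}` iff `c ≤ a < b ≤ d`. -/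
def PairLE {n : ℕ} (e f : Fin n × Fin n) : Prop :=
  f.1 ≤ e.1 ∧ e.2 ≤ f.2

/-- `τ({a,b})` is the transposition `(2a, 2b-1)` of `[2n]`; here vertices and the
elements of `[2n]` are 0-indexed, so it swaps the 0-based positions `2a+1` and `2b`. -/
def tau {n : ℕ} (e : Fin n × Fin n) : Equiv.Perm (Fin (2 * n)) :=
  Equiv.swap ⟨2 * e.1.val + 1, by have := e.1.isLt; omega⟩
    ⟨2 * e.2.val, by have := e.2.isLt; omega⟩

/-- `π₀ = (1,2)(3,4)⋯(2n-1,2n)` (0-indexed: swaps `2i` and `2i+1` for each `i < n`). -/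
def pi0 (n : ℕ) : Equiv.Perm (Fin (2 * n)) :=
  (List.ofFn (fun i : Fin n =>
    Equiv.swap ⟨2 * i.val, by have := i.isLt; omega⟩
      ⟨2 * i.val + 1, by have := i.isLt; omega⟩)).prod

/-- Dumont derangements of the second kind, on `Fin (2*n)` (0-indexed version of `[2n]`):
`π(2i-1) ≥ 2i-1`, `π(2i) < 2i` for `i ∈ [n]`, and `π(2i-1) > 2i-1` for `i ∈ [n-1]`. -/
def IsDumontDerangement {n : ℕ} (π : Equiv.Perm (Fin (2 * n))) : Prop :=
  (∀ i : Fin (2 * n), i.val % 2 = 0 → i.val ≤ (π i).val) ∧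
  (∀ i : Fin (2 * n), i.val % 2 = 1 → (π i).val < i.val) ∧
  (∀ i : Fin (2 * n), i.val % 2 = 0 → i.val < 2 * n - 2 → i.val < (π i).val)

/-- `i` and `j` are in edge configuration in `π` iff
`π⁻¹(i) < π⁻¹(j) ⟺ π⁻¹(i) ≡ π⁻¹(j) (mod 2)`. -/
def EdgeConfig {m : ℕ} (π : Equiv.Perm (Fin m)) (i j : Fin m) : Prop :=
  (π.symm i).val < (π.symm j).val ↔ (π.symm i).val % 2 = (π.symm j).val % 2

/-- A list `e₁ > ⋯ > e_m` of the edges of `G` (as pairs `(a,b)`, `a < b`), ordered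
descendingly with respect to a valid linear order (one extending `⪯`): no earlier
element is `⪯`-below a later one. -/
def ValidEdgeList {n : ℕ} (G : SimpleGraph (Fin n)) (l : List (Fin n × Fin n)) : Prop :=
  l.Nodup ∧ (∀ e : Fin n × Fin n, e ∈ l ↔ (e.1 < e.2 ∧ G.Adj e.1 e.2)) ∧
  l.Pairwise (fun e f => ¬ PairLE e f)

/-- `Π(G) = τ(e_m)⋯τ(e₁)π₀` for an edge list `[e₁,…,e_m]`. -/
lemma tau_apply {n : ℕ} (e : Fin n × Fin n) (q : Fin (2 * n)) :
    ((tau e) q).val = if q.val = 2 * e.1.val + 1 then 2 * e.2.val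
      else if q.val = 2 * e.2.val then 2 * e.1.val + 1 else q.val := by
  have hq := q.isLt
  unfold tau
  by_cases h1 : q.val = 2 * e.1.val + 1
  · have hqe : q = (⟨2 * e.1.val + 1, by omega⟩ : Fin (2 * n)) := Fin.eq_of_val_eq h1
    rw [hqe, Equiv.swap_apply_left]
    simp only [Fin.val_mk]
    split_ifs <;> omega
  · by_cases h2 : q.val = 2 * e.2.val
    · have hqe : q = (⟨2 * e.2.val, by omega⟩ : Fin (2 * n)) := Fin.eq_of_val_eq h2
      rw [hqe, Equiv.swap_apply_right]
      simp only [Fin.val_mk]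
      split_ifs <;> omega
    · rw [Equiv.swap_apply_of_ne_of_ne]
      · simp only [if_neg h1, if_neg h2]
      · exact fun h => h1 (congrArg Fin.val h)
      · exact fun h => h2 (congrArg Fin.val h)

lemma prod_fix {β : Type*} (L : List (Equiv.Perm β)) (x : β)
    (h : ∀ σ ∈ L, σ x = x) : L.prod x = x := by
  induction L with
  | nil => simp
  | cons σ t ih =>
    rw [List.prod_cons, Equiv.Perm.mul_apply, ih (fun τ ht => h τ (List.mem_cons_of_mem _ ht)),
      h σ (List.mem_cons_self)]

lemma pi0_apply {n : ℕ} (x : Fin (2 * n)) :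
    ((pi0 n) x).val = if x.val % 2 = 0 then x.val + 1 else x.val - 1 := by
  have hx := x.isLt
  set k := x.val / 2 with hk
  have hkn : k < n := by omega
  set f : Fin n → Equiv.Perm (Fin (2 * n)) := fun i =>
    Equiv.swap ⟨2 * i.val, by have := i.isLt; omega⟩
      ⟨2 * i.val + 1, by have := i.isLt; omega⟩ with hf
  have hmem : (⟨k, hkn⟩ : Fin n) ∈ List.finRange n := List.mem_finRange _
  obtain ⟨s, t, hst⟩ := List.append_of_mem hmem
  have hnd : (List.finRange n).Nodup := List.nodup_finRange n
  rw [hst] at hnd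
  obtain ⟨hs, hct, hdisj⟩ := List.nodup_append'.mp hnd
  have hks : (⟨k, hkn⟩ : Fin n) ∉ s := fun h => (hdisj h) (List.mem_cons_self)
  have hkt : (⟨k, hkn⟩ : Fin n) ∉ t := (List.nodup_cons.mp hct).1
  have hpi : pi0 n = (List.ofFn f).prod := rfl
  rw [hpi, List.ofFn_eq_map, hst, List.map_append, List.map_cons, List.prod_append,
    List.prod_cons, Equiv.Perm.mul_apply, Equiv.Perm.mul_apply]
  have htfix : (List.map f t).prod x = x := by
    apply prod_fix
    intro σ hσ
    obtain ⟨j, hjt, rfl⟩ := List.mem_map.mp hσ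
    have hjk : j.val ≠ k := fun h => hkt (by rwa [show (⟨k, hkn⟩ : Fin n) = j from Fin.eq_of_val_eq h.symm])
    apply Equiv.swap_apply_of_ne_of_ne
    · exact fun h => by have := congrArg Fin.val h; simp at this; omega
    · exact fun h => by have := congrArg Fin.val h; simp at this; omega
  rw [htfix]
  by_cases hpar : x.val % 2 = 0
  · have hxe : x = (⟨2 * k, by omega⟩ : Fin (2 * n)) := Fin.eq_of_val_eq (show x.val = 2 * k by omega)
    rw [hf]
    simp only []
    rw [hxe, Equiv.swap_apply_left]
    have : (List.map f s).prod (⟨2 * k + 1, by omega⟩ : Fin (2 * n)) = ⟨2 * k + 1, by omega⟩ := by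
      apply prod_fix
      intro σ hσ
      obtain ⟨j, hjs, rfl⟩ := List.mem_map.mp hσ
      have hjk : j.val ≠ k := fun h => hks (by rwa [show (⟨k, hkn⟩ : Fin n) = j from Fin.eq_of_val_eq h.symm])
      apply Equiv.swap_apply_of_ne_of_ne
      · exact fun h => by have := congrArg Fin.val h; simp at this; omega
      · exact fun h => by have := congrArg Fin.val h; simp at this; omega
    rw [this]
    simp only [Fin.val_mk]
    split_ifs <;> omega
  · have hxe : x = (⟨2 * k + 1, by omega⟩ : Fin (2 * n)) := Fin.eq_of_val_eq (show x.val = 2 * k + 1 by omega)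
    rw [hf]
    simp only []
    rw [hxe, Equiv.swap_apply_right]
    have : (List.map f s).prod (⟨2 * k, by omega⟩ : Fin (2 * n)) = ⟨2 * k, by omega⟩ := by
      apply prod_fix
      intro σ hσ
      obtain ⟨j, hjs, rfl⟩ := List.mem_map.mp hσ
      have hjk : j.val ≠ k := fun h => hks (by rwa [show (⟨k, hkn⟩ : Fin n) = j from Fin.eq_of_val_eq h.symm])
      apply Equiv.swap_apply_of_ne_of_ne
      · exact fun h => by have := congrArg Fin.val h; simp at this; omega
      · exact fun h => by have := congrArg Fin.val h; simp at this; omega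
    rw [this]
    simp only [Fin.val_mk]
    split_ifs <;> omega

lemma foldA {n : ℕ} (i : ℕ) (l : List (Fin n × Fin n)) (hlt : ∀ e ∈ l, e.1 < e.2)
    (hpw : l.Pairwise (fun e f => ¬ PairLE e f)) (p : Fin (2 * n))
    (hp : p.val ≤ 2 * i)
    (hodd : p.val % 2 = 1 → ∀ e ∈ l, 2 * e.1.val + 1 = p.val → e.2.val ≤ i) :
    (l.foldl (fun q e => (tau e) q) p).val ≤ 2 * i := by
  induction l generalizing p with
  | nil => simpa using hp
  | cons e t ih =>
    rw [List.foldl_cons]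
    rw [List.pairwise_cons] at hpw
    have hlt' : ∀ f ∈ t, f.1 < f.2 := fun f hf => hlt f (List.mem_cons_of_mem _ hf)
    have he : e.1.val < e.2.val := hlt e (List.mem_cons_self)
    have htv := tau_apply e p
    by_cases h1 : p.val = 2 * e.1.val + 1
    · rw [if_pos h1] at htv
      have hp2 : e.2.val ≤ i := hodd (by omega) e (List.mem_cons_self) (by omega)
      exact ih hlt' hpw.2 _ (by omega) (by intro h; omega)
    · rw [if_neg h1] at htv
      by_cases h2 : p.val = 2 * e.2.val
      · rw [if_pos h2] at htv
        apply ih hlt' hpw.2 _ (by omega)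
        intro _ f hf heq
        have hne : ¬ PairLE e f := hpw.1 f hf
        have hf1 : f.1.val = e.1.val := by omega
        have : ¬ (e.2 ≤ f.2) := fun hc => hne ⟨le_of_eq (Fin.eq_of_val_eq hf1), hc⟩
        have : f.2.val < e.2.val := by
          have := Fin.lt_def.mp (lt_of_not_ge this)
          omega
        omega
      · rw [if_neg h2] at htv
        apply ih hlt' hpw.2 _ (by omega)
        intro h f hf heq
        exact hodd (by omega) f (List.mem_cons_of_mem _ hf) (by omega)

lemma foldB {n : ℕ} (i : ℕ) (l : List (Fin n × Fin n)) (hlt : ∀ e ∈ l, e.1 < e.2)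
    (hpw : l.Pairwise (fun e f => ¬ PairLE e f)) (p : Fin (2 * n))
    (hp : 2 * i + 1 ≤ p.val)
    (hev : p.val % 2 = 0 → ∀ e ∈ l, 2 * e.2.val = p.val → i ≤ e.1.val) :
    2 * i + 1 ≤ (l.foldl (fun q e => (tau e) q) p).val := by
  induction l generalizing p with
  | nil => simpa using hp
  | cons e t ih =>
    rw [List.foldl_cons]
    rw [List.pairwise_cons] at hpw
    have hlt' : ∀ f ∈ t, f.1 < f.2 := fun f hf => hlt f (List.mem_cons_of_mem _ hf)
    have he : e.1.val < e.2.val := hlt e (List.mem_cons_self)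
    have htv := tau_apply e p
    by_cases h1 : p.val = 2 * e.1.val + 1
    · rw [if_pos h1] at htv
      apply ih hlt' hpw.2 _ (by omega)
      intro _ f hf heq
      have hne : ¬ PairLE e f := hpw.1 f hf
      have hf2 : f.2.val = e.2.val := by omega
      have : ¬ (f.1 ≤ e.1) := fun hc => hne ⟨hc, le_of_eq (Fin.eq_of_val_eq hf2.symm)⟩
      have : e.1.val < f.1.val := by
        have := Fin.lt_def.mp (lt_of_not_ge this)
        omega
      omega
    · rw [if_neg h1] at htv
      by_cases h2 : p.val = 2 * e.2.val
      · rw [if_pos h2] at htv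
        have hp2 : i ≤ e.1.val := hev (by omega) e (List.mem_cons_self) (by omega)
        exact ih hlt' hpw.2 _ (by omega) (by intro h; omega)
      · rw [if_neg h2] at htv
        apply ih hlt' hpw.2 _ (by omega)
        intro h f hf heq
        exact hev (by omega) f (List.mem_cons_of_mem _ hf) (by omega)

lemma prod_reverse_map {n : ℕ} (l : List (Fin n × Fin n)) (p : Fin (2 * n)) :
    ((l.reverse.map tau).prod) p = l.foldl (fun q e => (tau e) q) p := by
  induction l generalizing p with
  | nil => simp
  | cons e t ih =>
    rw [List.reverse_cons, List.map_append, List.prod_append, List.foldl_cons]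
    simp only [List.map_cons, List.map_nil, List.prod_cons, List.prod_nil, mul_one,
      Equiv.Perm.mul_apply]
    exact ih (tau e p)

def permOfList {n : ℕ} (l : List (Fin n × Fin n)) : Equiv.Perm (Fin (2 * n)) :=
  (l.reverse.map tau).prod * pi0 n

/-- For every graph `G` on `[n]`, `Π(G)` is a Dumont derangement of the second kind. -/
theorem permOfList_isDumontDerangement {n : ℕ} (G : SimpleGraph (Fin n))
    (l : List (Fin n × Fin n)) (hl : ValidEdgeList G l) :
    IsDumontDerangement (permOfList l) := by
  obtain ⟨hnd, hiff, hpw⟩ := hl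
  have hlt : ∀ e ∈ l, e.1 < e.2 := fun e he => ((hiff e).mp he).1
  have key : ∀ x : Fin (2 * n),
      permOfList l x = l.foldl (fun q e => (tau e) q) (pi0 n x) := fun x => by
    rw [permOfList, Equiv.Perm.mul_apply, prod_reverse_map]
  have hA : ∀ x : Fin (2 * n), x.val % 2 = 1 → (permOfList l x).val < x.val := by
    intro x hx
    rw [key]
    have hpi := pi0_apply (n := n) x
    rw [if_neg (by omega)] at hpi
    have hfa := foldA (x.val / 2) l hlt hpw (pi0 n x) (by omega)
      (fun h => absurd h (by omega))
    omega
  have hB : ∀ x : Fin (2 * n), x.val % 2 = 0 → x.val < (permOfList l x).val := by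
    intro x hx
    rw [key]
    have hpi := pi0_apply (n := n) x
    rw [if_pos hx] at hpi
    have hfb := foldB (x.val / 2) l hlt hpw (pi0 n x) (by omega)
      (fun h => absurd h (by omega))
    omega
  exact ⟨fun i hi => le_of_lt (hB i hi), hA, fun i hi _ => hB i hi⟩
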